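/- Let F be a CDF on [0,1] with F(u+d) - F(u) ≤ βd for all u and d > 0 (Lipschitz with constant β). Then for K i.i.d. samples with largest value V and second largest U, P(V - U ≤ d) ≤ 1 - (1 - βKd) F^K(1-d). -/

import Mathlib

open MeasureTheory

/-- The largest of K real values. -/
noncomputable def largestVal {K : ℕ} (ω : Fin K → ℝ) : ℝ := ⨆ i, ω i

/-- The second largest of K real values: min over i of the max over j ≠ i. -/
noncomputable def secondLargestVal {K : ℕ} (ω : Fin K → ℝ) : ℝ :=
  ⨅ i, ⨆ j : {j : Fin K // j ≠ i}, ω (j : Fin K)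

open Set
open scoped ENNReal

section aux

lemma pi_slice {n : ℕ} (π : Measure ℝ) [IsProbabilityMeasure π] (i : Fin (n+1))
    {A : Set (Fin (n+1) → ℝ)} (hA : MeasurableSet A) :
    Measure.pi (fun _ : Fin (n+1) => π) A
      = ∫⁻ x, Measure.pi (fun _ : Fin n => π) {r | i.insertNth x r ∈ A} ∂π := by
  have hmp := measurePreserving_piFinSuccAbove (fun _ : Fin (n+1) => π) i
  set e := MeasurableEquiv.piFinSuccAbove (fun _ : Fin (n+1) => ℝ) i with he
  have hA' : MeasurableSet (e.symm ⁻¹' A) := e.symm.measurable hA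
  have h1 : A = e ⁻¹' (e.symm ⁻¹' A) := by ext ω; simp
  rw [h1, hmp.measure_preimage_equiv, Measure.prod_apply hA']
  refine lintegral_congr fun x => ?_
  congr 1
  ext r
  simp [e, MeasurableEquiv.piFinSuccAbove, Fin.insertNthEquiv]

-- measure of the pair event
lemma measB {n : ℕ} (π : Measure ℝ) [IsProbabilityMeasure π] (d : ℝ)
    {i j : Fin (n+2)} (hij : i ≠ j) :
    Measure.pi (fun _ : Fin (n+2) => π)
        {ω : Fin (n+2) → ℝ | (∀ k, k ≠ j → ω k ≤ ω i) ∧ ω i ≤ ω j ∧ ω j ≤ ω i + d}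
      = ∫⁻ x, π (Icc x (x+d)) * π (Iic x) ^ n ∂π := by
  set A : Set (Fin (n+2) → ℝ) :=
    {ω : Fin (n+2) → ℝ | (∀ k, k ≠ j → ω k ≤ ω i) ∧ ω i ≤ ω j ∧ ω j ≤ ω i + d} with hAdef
  have hA : MeasurableSet A := by
    have h1 : {ω : Fin (n+2) → ℝ | ∀ k, k ≠ j → ω k ≤ ω i}
        = ⋂ k ∈ ({j}ᶜ : Set (Fin (n+2))), {ω : Fin (n+2) → ℝ | ω k ≤ ω i} := by
      ext ω; simp
    have hmes1 : MeasurableSet {ω : Fin (n+2) → ℝ | ∀ k, k ≠ j → ω k ≤ ω i} := by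
      have h1' : MeasurableSet (⋂ k ∈ ({j}ᶜ : Set (Fin (n+2))), {ω : Fin (n+2) → ℝ | ω k ≤ ω i}) :=
        MeasurableSet.biInter (Set.to_countable _) fun k _ =>
          measurableSet_le (measurable_pi_apply k) (measurable_pi_apply i)
      rw [← h1] at h1'
      exact h1'
    exact hmes1.inter <| (measurableSet_le (measurable_pi_apply i) (measurable_pi_apply j)).inter
        (measurableSet_le (measurable_pi_apply j) (by fun_prop : Measurable fun ω : Fin (n+2) → ℝ => ω i + d))
  rw [pi_slice π i hA]
  refine lintegral_congr fun x => ?_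
  obtain ⟨l₀, hl₀⟩ := Fin.exists_succAbove_eq (Ne.symm hij)
  have hset : {r : Fin (n+1) → ℝ | i.insertNth x r ∈ A}
      = univ.pi (fun l => if i.succAbove l = j then Icc x (x+d) else Iic x) := by
    ext r
    simp only [hAdef, mem_setOf_eq, mem_pi, mem_univ, forall_true_left,
      Fin.insertNth_apply_same]
    constructor
    · rintro ⟨h1, h2, h3⟩ l
      by_cases hl : i.succAbove l = j
      · rw [if_pos hl]
        have hr := Fin.insertNth_apply_succAbove (α := fun _ => ℝ) i x r l
        rw [hl] at hr
        exact ⟨by rw [← hr]; exact h2, by rw [← hr]; exact h3⟩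
      · rw [if_neg hl]
        have := h1 (i.succAbove l) hl
        rwa [Fin.insertNth_apply_succAbove] at this
    · intro h
      have hj' : x ≤ r l₀ ∧ r l₀ ≤ x + d := by
        have := h l₀
        rwa [if_pos hl₀] at this
      have hωj : i.insertNth (α := fun _ => ℝ) x r j = r l₀ := by
        rw [← hl₀]; exact Fin.insertNth_apply_succAbove (α := fun _ => ℝ) i x r l₀
      refine ⟨fun k hk => ?_, by rw [hωj]; exact hj'.1, by rw [hωj]; exact hj'.2⟩
      rcases eq_or_ne k i with rfl | hki
      · simp
      · obtain ⟨l, rfl⟩ := Fin.exists_succAbove_eq hki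
        rw [Fin.insertNth_apply_succAbove]
        have := h l
        rw [if_neg hk] at this
        exact this
  rw [hset, Measure.pi_pi]
  rw [← Finset.mul_prod_erase Finset.univ _ (Finset.mem_univ l₀), if_pos hl₀]
  congr 1
  rw [Finset.prod_congr rfl (fun l hl => ?_), Finset.prod_const,
    Finset.card_erase_of_mem (Finset.mem_univ _), Finset.card_univ, Fintype.card_fin]
  · rfl
  · rw [if_neg]
    intro hc
    exact (Finset.mem_erase.1 hl).1 (Fin.succAbove_right_injective (hc.trans hl₀.symm))

lemma exists_min_argmax {m : ℕ} (ω : Fin (m+1) → ℝ) :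
    ∃ i, (∀ k, ω k ≤ ω i) ∧ ∀ k, k < i → ω k < ω i := by
  classical
  obtain ⟨i0, -, hi0⟩ := Finset.exists_max_image Finset.univ ω ⟨0, Finset.mem_univ 0⟩
  set M : Finset (Fin (m+1)) := Finset.univ.filter (fun i => ∀ k, ω k ≤ ω i) with hM
  have hMne : M.Nonempty := ⟨i0, by simp [hM, fun k => hi0 k (Finset.mem_univ k)]⟩
  refine ⟨M.min' hMne, ?_, ?_⟩
  · have := M.min'_mem hMne
    simp only [hM, Finset.mem_filter] at this
    exact this.2
  · intro k hk
    have hmax : ∀ k', ω k' ≤ ω (M.min' hMne) := by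
      have := M.min'_mem hMne
      simp only [hM, Finset.mem_filter] at this
      exact this.2
    by_contra hc
    push_neg at hc
    have hkeq : ω k = ω (M.min' hMne) := le_antisymm (hmax k) hc
    have hkM : k ∈ M := by
      simp only [hM, Finset.mem_filter]
      exact ⟨Finset.mem_univ _, fun k' => hkeq ▸ hmax k'⟩
    exact absurd (M.min'_le k hkM) (not_le.2 hk)

lemma measurable_D {m : ℕ} (i : Fin (m+1)) {S : Set ℝ} (hS : MeasurableSet S) :
    MeasurableSet {ω : Fin (m+1) → ℝ | (∀ k, k < i → ω k < ω i) ∧ (∀ k, ω k ≤ ω i) ∧ ω i ∈ S} := by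
  refine MeasurableSet.inter ?_ (MeasurableSet.inter ?_ ?_)
  · have h1 : {ω : Fin (m+1) → ℝ | ∀ k, k < i → ω k < ω i}
        = ⋂ k ∈ ({k | k < i} : Set (Fin (m+1))), {ω : Fin (m+1) → ℝ | ω k < ω i} := by
      ext ω; simp
    have h1' : MeasurableSet (⋂ k ∈ ({k | k < i} : Set (Fin (m+1))), {ω : Fin (m+1) → ℝ | ω k < ω i}) :=
      MeasurableSet.biInter (Set.to_countable _) fun k _ =>
        measurableSet_lt (measurable_pi_apply k) (measurable_pi_apply i)
    rw [← h1] at h1'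
    exact h1'
  · have h2 : {ω : Fin (m+1) → ℝ | ∀ k, ω k ≤ ω i} = ⋂ k, {ω : Fin (m+1) → ℝ | ω k ≤ ω i} := by
      ext ω; simp
    have h2' : MeasurableSet (⋂ k, {ω : Fin (m+1) → ℝ | ω k ≤ ω i}) :=
      MeasurableSet.iInter fun k =>
        measurableSet_le (measurable_pi_apply k) (measurable_pi_apply i)
    rw [← h2] at h2'
    exact h2'
  · exact (measurable_pi_apply i) hS

lemma measD {m : ℕ} (π : Measure ℝ) [IsProbabilityMeasure π] (hna : ∀ x : ℝ, π {x} = 0)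
    (i : Fin (m+1)) {S : Set ℝ} (hS : MeasurableSet S) :
    Measure.pi (fun _ : Fin (m+1) => π)
        {ω : Fin (m+1) → ℝ | (∀ k, k < i → ω k < ω i) ∧ (∀ k, ω k ≤ ω i) ∧ ω i ∈ S}
      = ∫⁻ x in S, π (Iic x) ^ m ∂π := by
  have hIio : ∀ x : ℝ, π (Iio x) = π (Iic x) := by
    intro x
    have : π (Iic x) = π (Iio x) + π {x} := by
      rw [← measure_union (by simp) (measurableSet_singleton x), Iio_union_right]
    rw [this, hna, add_zero]
  rw [pi_slice π i (measurable_D i hS), ← lintegral_indicator hS]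
  refine lintegral_congr fun x => ?_
  by_cases hx : x ∈ S
  · rw [indicator_of_mem hx]
    have hset : {r : Fin m → ℝ | i.insertNth x r ∈
          {ω : Fin (m+1) → ℝ | (∀ k, k < i → ω k < ω i) ∧ (∀ k, ω k ≤ ω i) ∧ ω i ∈ S}}
        = univ.pi (fun l => if i.succAbove l < i then Iio x else Iic x) := by
      ext r
      simp only [mem_setOf_eq, mem_pi, mem_univ, forall_true_left, Fin.insertNth_apply_same]
      constructor
      · rintro ⟨h1, h2, -⟩ l
        by_cases hl : i.succAbove l < i
        · rw [if_pos hl]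
          have := h1 (i.succAbove l) hl
          rwa [Fin.insertNth_apply_succAbove] at this
        · rw [if_neg hl]
          have := h2 (i.succAbove l)
          rwa [Fin.insertNth_apply_succAbove] at this
      · intro h
        refine ⟨fun k hk => ?_, fun k => ?_, hx⟩
        · have hki : k ≠ i := ne_of_lt hk
          obtain ⟨l, rfl⟩ := Fin.exists_succAbove_eq hki
          rw [Fin.insertNth_apply_succAbove]
          have := h l
          rw [if_pos hk] at this
          exact this
        · rcases eq_or_ne k i with rfl | hki
          · simp
          · obtain ⟨l, rfl⟩ := Fin.exists_succAbove_eq hki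
            rw [Fin.insertNth_apply_succAbove]
            have := h l
            split at this
            · exact le_of_lt this
            · exact this
    rw [hset, Measure.pi_pi]
    have : ∀ l : Fin m, π (if i.succAbove l < i then Iio x else Iic x) = π (Iic x) := by
      intro l; split
      · exact hIio x
      · rfl
    rw [Finset.prod_congr rfl fun l _ => this l, Finset.prod_const, Finset.card_univ,
      Fintype.card_fin]
  · rw [indicator_of_notMem hx]
    have hemp : {r : Fin m → ℝ | i.insertNth x r ∈
          {ω : Fin (m+1) → ℝ | (∀ k, k < i → ω k < ω i) ∧ (∀ k, ω k ≤ ω i) ∧ ω i ∈ S}}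
        = (∅ : Set (Fin m → ℝ)) := by
      ext r
      simp only [mem_setOf_eq, mem_empty_iff_false, iff_false]
      rintro ⟨-, -, hmem⟩
      rw [Fin.insertNth_apply_same] at hmem
      exact hx hmem
    rw [hemp, measure_empty]

lemma iden_S {m : ℕ} (π : Measure ℝ) [IsProbabilityMeasure π] (hna : ∀ x : ℝ, π {x} = 0)
    {S : Set ℝ} (hS : MeasurableSet S) :
    ((m+1 : ℕ) : ℝ≥0∞) * ∫⁻ x in S, π (Iic x) ^ m ∂π
      = Measure.pi (fun _ : Fin (m+1) => π)
          {ω : Fin (m+1) → ℝ | ∃ i, (∀ k, ω k ≤ ω i) ∧ ω i ∈ S} := by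
  set D : Fin (m+1) → Set (Fin (m+1) → ℝ) :=
    fun i => {ω | (∀ k, k < i → ω k < ω i) ∧ (∀ k, ω k ≤ ω i) ∧ ω i ∈ S} with hD
  have key : ∀ i j : Fin (m+1), i < j → Disjoint (D i) (D j) := by
    intro i j hij
    rw [Set.disjoint_left]
    rintro ω ⟨-, hle, -⟩ ⟨hlt, -, -⟩
    exact absurd (hle j) (not_le.2 (hlt i hij))
  have hdisj : Pairwise (Function.onFun Disjoint D) := by
    intro i j hij
    rcases hij.lt_or_gt with h | h
    · exact key i j h
    · exact (key j i h).symm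
  have hunion : ⋃ i, D i = {ω : Fin (m+1) → ℝ | ∃ i, (∀ k, ω k ≤ ω i) ∧ ω i ∈ S} := by
    ext ω
    simp only [hD, mem_iUnion, mem_setOf_eq]
    constructor
    · rintro ⟨i, -, hle, hiS⟩
      exact ⟨i, hle, hiS⟩
    · rintro ⟨i₀, hmax, hiS⟩
      obtain ⟨j, hjmax, hjlt⟩ := exists_min_argmax ω
      have heq : ω j = ω i₀ := le_antisymm (hmax j) (hjmax i₀)
      exact ⟨j, hjlt, hjmax, heq ▸ hiS⟩
  rw [← hunion, measure_iUnion hdisj (fun i => measurable_D i hS)]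
  rw [tsum_fintype]
  rw [Finset.sum_congr rfl (fun i _ => measD π hna i hS), Finset.sum_const,
    Finset.card_univ, Fintype.card_fin, nsmul_eq_mul]

lemma iden_Iic {m : ℕ} (π : Measure ℝ) [IsProbabilityMeasure π] (hna : ∀ x : ℝ, π {x} = 0)
    (a : ℝ) :
    ((m+1 : ℕ) : ℝ≥0∞) * ∫⁻ x in Iic a, π (Iic x) ^ m ∂π = π (Iic a) ^ (m+1) := by
  rw [iden_S π hna measurableSet_Iic]
  have : {ω : Fin (m+1) → ℝ | ∃ i, (∀ k, ω k ≤ ω i) ∧ ω i ∈ Iic a}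
      = univ.pi (fun _ => Iic a) := by
    ext ω
    simp only [mem_setOf_eq, mem_pi, mem_univ, forall_true_left, mem_Iic]
    constructor
    · rintro ⟨i, hmax, hia⟩ k
      exact (hmax k).trans hia
    · intro h
      obtain ⟨i, hmax, -⟩ := exists_min_argmax ω
      exact ⟨i, hmax, h i⟩
  rw [this, Measure.pi_pi, Finset.prod_const, Finset.card_univ, Fintype.card_fin]

lemma iden_univ {m : ℕ} (π : Measure ℝ) [IsProbabilityMeasure π] (hna : ∀ x : ℝ, π {x} = 0) :
    ((m+1 : ℕ) : ℝ≥0∞) * ∫⁻ x, π (Iic x) ^ m ∂π = 1 := by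
  have h := iden_S π hna MeasurableSet.univ (m := m)
  rw [Measure.restrict_univ] at h
  rw [h]
  have : {ω : Fin (m+1) → ℝ | ∃ i, (∀ k, ω k ≤ ω i) ∧ ω i ∈ univ} = univ := by
    ext ω
    simp only [mem_univ, and_true, mem_setOf_eq, iff_true]
    obtain ⟨i, hmax, -⟩ := exists_min_argmax ω
    exact ⟨i, hmax⟩
  rw [this, measure_univ]

end aux

/-- If the CDF F of the i.i.d. samples on [0,1] is β-Lipschitz, then the gap
Δ₂ = V - U between the largest and second largest satisfies
P(V - U ≤ d) ≤ 1 - (1 - βKd) F^K(1-d). -/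
theorem gap_probability_bound (K : ℕ) (hK : 2 ≤ K)
    (π : Measure ℝ) [IsProbabilityMeasure π] (F : ℝ → ℝ) (β : ℝ) (hβ : 0 ≤ β)
    (hF : ∀ x, F x = (π (Set.Iic x)).toReal)
    (hLip : ∀ u : ℝ, ∀ d : ℝ, 0 < d → F (u + d) - F u ≤ β * d)
    (hsupp : π (Set.Icc (0:ℝ) 1) = 1)
    (d : ℝ) (hd : 0 < d) :
    ((Measure.pi fun _ : Fin K => π)
        {ω | largestVal ω - secondLargestVal ω ≤ d}).toReal ≤
      1 - (1 - β * K * d) * F (1 - d) ^ K := by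
  
  obtain ⟨n, rfl⟩ : ∃ n, K = n + 2 := ⟨K - 2, by omega⟩
  clear hK
  set μK := Measure.pi (fun _ : Fin (n+2) => π) with hμK
  -- basic facts about F and π
  have hFval : ∀ x, π (Iic x) = ENNReal.ofReal (F x) := fun x => by
    rw [hF x, ENNReal.ofReal_toReal (measure_ne_top π _)]
  have hF0 : ∀ x, 0 ≤ F x := fun x => hF x ▸ ENNReal.toReal_nonneg
  have hF1 : ∀ x, F x ≤ 1 := fun x => by
    rw [hF x]
    exact ENNReal.toReal_le_of_le_ofReal zero_le_one (by simpa using prob_le_one)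
  have hna : ∀ x : ℝ, π {x} = 0 := by
    intro x
    have key : ∀ ε : ℝ, 0 < ε → (π {x}).toReal ≤ β * ε := by
      intro ε hε
      have h1 : π {x} ≤ π (Ioc (x - ε) x) := by
        apply measure_mono
        intro y hy
        simp only [mem_singleton_iff] at hy
        subst hy
        exact ⟨by linarith, le_refl y⟩
      have h2 : (π (Ioc (x - ε) x)).toReal = F x - F (x - ε) := by
        have hdiff : π (Ioc (x - ε) x) = π (Iic x) - π (Iic (x - ε)) := by
          rw [← measure_diff (Iic_subset_Iic.2 (by linarith)) measurableSet_Iic.nullMeasurableSet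
            (measure_ne_top π _)]
          congr 1
          ext y
          simp only [mem_Ioc, mem_diff, mem_Iic, not_le]
          exact and_comm
        rw [hdiff, ENNReal.toReal_sub_of_le (measure_mono (Iic_subset_Iic.2 (by linarith)))
          (measure_ne_top π _), hF x, hF (x - ε)]
      have h3 : F x - F (x - ε) ≤ β * ε := by
        have := hLip (x - ε) ε hε
        rwa [sub_add_cancel] at this
      calc (π {x}).toReal ≤ (π (Ioc (x - ε) x)).toReal :=
            ENNReal.toReal_mono (measure_ne_top π _) h1
        _ = F x - F (x - ε) := h2
        _ ≤ β * ε := h3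
    have h0 : (π {x}).toReal ≤ 0 := by
      by_contra hc
      push_neg at hc
      have := key ((π {x}).toReal / (β + 1)) (by positivity)
      have hb : β / (β + 1) < 1 := by
        rw [div_lt_one (by linarith)]; linarith
      have h4 : (π {x}).toReal * (β/(β+1)) < (π {x}).toReal * 1 :=
        mul_lt_mul_of_pos_left hb hc
      have h5 : β * ((π {x}).toReal / (β + 1)) = (π {x}).toReal * (β/(β+1)) := by ring
      linarith
    have := le_antisymm h0 ENNReal.toReal_nonneg
    rw [ENNReal.toReal_eq_zero_iff] at this
    exact this.resolve_right (measure_ne_top π _)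
  have hIio : ∀ x : ℝ, π (Iio x) = π (Iic x) := by
    intro x
    have h : π (Iic x) = π (Iio x) + π {x} := by
      rw [← measure_union (by simp) (measurableSet_singleton x), Iio_union_right]
    rw [h, hna, add_zero]
  -- the union bound
  set T := ∫⁻ x, π (Icc x (x+d)) * π (Iic x) ^ n ∂π with hT
  have hEvent : μK {ω | largestVal ω - secondLargestVal ω ≤ d}
      ≤ ((n+2) * (n+1) : ℕ) * T := by
    set B : Fin (n+2) → Fin (n+2) → Set (Fin (n+2) → ℝ) := fun i j =>
      {ω : Fin (n+2) → ℝ | (∀ k, k ≠ j → ω k ≤ ω i) ∧ ω i ≤ ω j ∧ ω j ≤ ω i + d} with hB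
    have hsub : {ω : Fin (n+2) → ℝ | largestVal ω - secondLargestVal ω ≤ d}
        ⊆ ⋃ j ∈ Finset.univ, ⋃ i ∈ Finset.univ.erase j, B i j := by
      intro ω hω
      simp only [mem_setOf_eq] at hω
      obtain ⟨j, -, hj⟩ := Finset.exists_max_image Finset.univ ω ⟨0, Finset.mem_univ 0⟩
      have hne : (Finset.univ.erase j).Nonempty := by
        rw [← Finset.card_pos, Finset.card_erase_of_mem (Finset.mem_univ j),
          Finset.card_univ, Fintype.card_fin]
        omega
      obtain ⟨i, hi_mem, hi⟩ := Finset.exists_max_image (Finset.univ.erase j) ω hne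
      have hij : i ≠ j := (Finset.mem_erase.1 hi_mem).1
      have hbdd : BddAbove (Set.range ω) := (Set.finite_range ω).bddAbove
      have hV1 : largestVal ω ≤ ω j := ciSup_le (fun k => hj k (Finset.mem_univ k))
      have hV2 : ω j ≤ largestVal ω := le_ciSup hbdd j
      haveI : Nonempty {k : Fin (n+2) // k ≠ j} := ⟨⟨i, hij⟩⟩
      have hU1 : secondLargestVal ω ≤ ⨆ k : {k : Fin (n+2) // k ≠ j}, ω k := by
        apply ciInf_le
        apply Set.Finite.bddBelow
        apply Set.Finite.subset (Set.finite_range (fun m : Fin (n+2) =>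
          ⨆ k : {k : Fin (n+2) // k ≠ m}, ω k))
        exact Set.range_subset_iff.2 fun m => Set.mem_range_self m
      have hU2 : (⨆ k : {k : Fin (n+2) // k ≠ j}, ω k) ≤ ω i :=
        ciSup_le fun ⟨k, hk⟩ => hi k (Finset.mem_erase.2 ⟨hk, Finset.mem_univ k⟩)
      have hωj : ω j ≤ ω i + d := by
        have := hω
        have hU : secondLargestVal ω ≤ ω i := hU1.trans hU2
        linarith
      refine Set.mem_biUnion (Finset.mem_univ j) (Set.mem_biUnion hi_mem ?_)
      exact ⟨fun k hk => hi k (Finset.mem_erase.2 ⟨hk, Finset.mem_univ k⟩),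
        hj i (Finset.mem_univ i), hωj⟩
    calc μK {ω | largestVal ω - secondLargestVal ω ≤ d}
        ≤ μK (⋃ j ∈ Finset.univ, ⋃ i ∈ Finset.univ.erase j, B i j) := measure_mono hsub
      _ ≤ ∑ j ∈ Finset.univ, μK (⋃ i ∈ Finset.univ.erase j, B i j) :=
          measure_biUnion_finset_le _ _
      _ ≤ ∑ j ∈ Finset.univ, ∑ i ∈ Finset.univ.erase j, μK (B i j) :=
          Finset.sum_le_sum fun j _ => measure_biUnion_finset_le _ _
      _ = ∑ j ∈ Finset.univ, ∑ i ∈ Finset.univ.erase j, T := by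
          refine Finset.sum_congr rfl fun j _ => Finset.sum_congr rfl fun i hi => ?_
          exact measB π d (Finset.mem_erase.1 hi).1
      _ = ((n+2) * (n+1) : ℕ) * T := by
          simp only [Finset.sum_const, Finset.card_erase_of_mem (Finset.mem_univ _),
            Finset.card_univ, Fintype.card_fin]
          rw [smul_smul, nsmul_eq_mul]
          norm_num
  -- measurability of integrands
  have hGmeas : Measurable (fun x => π (Iic x)) :=
    Monotone.measurable (fun a b hab => measure_mono (Iic_subset_Iic.2 hab))
  -- split the integral
  have hsplit : T = (∫⁻ x in Iic (1-d), π (Icc x (x+d)) * π (Iic x) ^ n ∂π)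
      + ∫⁻ x in Ioi (1-d), π (Icc x (x+d)) * π (Iic x) ^ n ∂π := by
    rw [← compl_Iic, lintegral_add_compl _ measurableSet_Iic]
  -- bound piece 1
  have hT1 : (∫⁻ x in Iic (1-d), π (Icc x (x+d)) * π (Iic x) ^ n ∂π)
      ≤ ENNReal.ofReal (β * d) * ∫⁻ x in Iic (1-d), π (Iic x) ^ n ∂π := by
    rw [← lintegral_const_mul _ (hGmeas.pow_const n)]
    refine lintegral_mono fun x => ?_
    apply mul_le_mul_left
    have h1 : π (Icc x (x+d)) ≤ π (Ioc (x - 1) (x + d)) :=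
      measure_mono (fun y hy => ⟨by linarith [hy.1], hy.2⟩)
    have h2 : π (Icc x (x+d)) = π (Iic (x+d)) - π (Iio x) := by
      rw [← measure_diff (fun y (hy : y ∈ Iio x) => (mem_Iic.2 (by
          simp at hy; linarith))) measurableSet_Iio.nullMeasurableSet (measure_ne_top π _)]
      congr 1
      ext y
      simp only [mem_Icc, mem_diff, mem_Iic, mem_Iio, not_lt]
      constructor
      · rintro ⟨h1, h2⟩; exact ⟨h2, h1⟩
      · rintro ⟨h1, h2⟩; exact ⟨h2, h1⟩
    rw [h2, hIio, tsub_le_iff_right, hFval, hFval, ← ENNReal.ofReal_add (by positivity) (hF0 x)]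
    exact ENNReal.ofReal_le_ofReal (by linarith [hLip x d hd])
  -- bound piece 2
  have hT2 : (∫⁻ x in Ioi (1-d), π (Icc x (x+d)) * π (Iic x) ^ n ∂π)
      ≤ (∫⁻ x in Ioi (1-d), π (Iic x) ^ n ∂π)
        - ∫⁻ x in Ioi (1-d), π (Iic x) ^ (n+1) ∂π := by
    have hpt : ∀ x : ℝ, π (Icc x (x+d)) * π (Iic x) ^ n
        ≤ π (Iic x) ^ n - π (Iic x) ^ (n+1) := by
      intro x
      have h1 : π (Icc x (x+d)) ≤ 1 - π (Iic x) := by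
        have hIci : π (Ici x) = 1 - π (Iic x) := by
          rw [← hIio, ← compl_Iio, measure_compl measurableSet_Iio (measure_ne_top π _),
            measure_univ]
        rw [← hIci]
        exact measure_mono Icc_subset_Ici_self
      calc π (Icc x (x+d)) * π (Iic x) ^ n ≤ (1 - π (Iic x)) * π (Iic x) ^ n :=
            mul_le_mul_left h1 _
        _ = π (Iic x) ^ n - π (Iic x) ^ (n+1) := by
            rw [ENNReal.sub_mul (fun _ _ => ENNReal.pow_ne_top (measure_ne_top π _)), one_mul,
              pow_succ, mul_comm (π (Iic x) ^ n) (π (Iic x)), mul_comm (π (Iic x))]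
    calc (∫⁻ x in Ioi (1-d), π (Icc x (x+d)) * π (Iic x) ^ n ∂π)
        ≤ ∫⁻ x in Ioi (1-d), (π (Iic x) ^ n - π (Iic x) ^ (n+1)) ∂π :=
          lintegral_mono fun x => hpt x
      _ = (∫⁻ x in Ioi (1-d), π (Iic x) ^ n ∂π) - ∫⁻ x in Ioi (1-d), π (Iic x) ^ (n+1) ∂π := by
          have hfin : (∫⁻ x in Ioi (1-d), π (Iic x) ^ (n+1) ∂π) ≠ ⊤ := by
            have hle : (∫⁻ x in Ioi (1-d), π (Iic x) ^ (n+1) ∂π) ≤ 1 := by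
              calc (∫⁻ x in Ioi (1-d), π (Iic x) ^ (n+1) ∂π)
                  ≤ ∫⁻ _x in Ioi (1-d), (1:ℝ≥0∞) ∂π :=
                    lintegral_mono fun x => pow_le_one' prob_le_one (n+1)
                _ ≤ ∫⁻ _x, (1:ℝ≥0∞) ∂π := setLIntegral_le_lintegral _ _
                _ = 1 := by rw [lintegral_one, measure_univ]
            exact ne_top_of_le_ne_top ENNReal.one_ne_top hle
          rw [lintegral_sub (hGmeas.pow_const (n+1)) hfin
            (Filter.Eventually.of_forall fun x =>
              pow_le_pow_right_of_le_one' prob_le_one (Nat.le_succ n))]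
  -- name the integrals
  set I1 := ∫⁻ x in Iic (1-d), π (Iic x) ^ n ∂π with hI1def
  set J1 := ∫⁻ x in Ioi (1-d), π (Iic x) ^ n ∂π with hJ1def
  set J2 := ∫⁻ x in Ioi (1-d), π (Iic x) ^ (n+1) ∂π with hJ2def
  set I2 := ∫⁻ x in Iic (1-d), π (Iic x) ^ (n+1) ∂π with hI2def
  set A1 := ∫⁻ x, π (Iic x) ^ n ∂π with hA1def
  set A2 := ∫⁻ x, π (Iic x) ^ (n+1) ∂π with hA2def
  -- boundedness
  have hb1 : ∀ (m : ℕ) (s : Set ℝ), (∫⁻ x in s, π (Iic x) ^ m ∂π) ≤ 1 := by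
    intro m s
    calc (∫⁻ x in s, π (Iic x) ^ m ∂π) ≤ ∫⁻ _x in s, (1:ℝ≥0∞) ∂π :=
          lintegral_mono fun x => pow_le_one' prob_le_one m
      _ ≤ ∫⁻ _x, (1:ℝ≥0∞) ∂π := setLIntegral_le_lintegral _ _
      _ = 1 := by rw [lintegral_one, measure_univ]
  have hI1fin : I1 ≠ ⊤ := ne_top_of_le_ne_top ENNReal.one_ne_top (hb1 n _)
  have hJ1fin : J1 ≠ ⊤ := ne_top_of_le_ne_top ENNReal.one_ne_top (hb1 n _)
  have hJ2fin : J2 ≠ ⊤ := ne_top_of_le_ne_top ENNReal.one_ne_top (hb1 (n+1) _)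
  have hI2fin : I2 ≠ ⊤ := ne_top_of_le_ne_top ENNReal.one_ne_top (hb1 (n+1) _)
  have hA1fin : A1 ≠ ⊤ := by
    rw [hA1def, ← setLIntegral_univ]
    exact ne_top_of_le_ne_top ENNReal.one_ne_top (hb1 n _)
  have hA2fin : A2 ≠ ⊤ := by
    rw [hA2def, ← setLIntegral_univ]
    exact ne_top_of_le_ne_top ENNReal.one_ne_top (hb1 (n+1) _)
  -- identities
  have hiden1 := iden_Iic (m := n) π hna (1 - d)
  have hidenA1 := iden_univ (m := n) π hna
  have hiden2 := iden_Iic (m := n+1) π hna (1 - d)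
  have hidenA2 := iden_univ (m := n+1) π hna
  rw [← hI1def] at hiden1
  rw [← hA1def] at hidenA1
  rw [← hI2def] at hiden2
  rw [← hA2def] at hidenA2
  have hIJ1 : I1 + J1 = A1 := by
    rw [hI1def, hJ1def, hA1def, ← compl_Iic, lintegral_add_compl _ measurableSet_Iic]
  have hIJ2 : I2 + J2 = A2 := by
    rw [hI2def, hJ2def, hA2def, ← compl_Iic, lintegral_add_compl _ measurableSet_Iic]
  have hJ2J1 : J2 ≤ J1 :=
    lintegral_mono fun x => pow_le_pow_right_of_le_one' prob_le_one (Nat.le_succ n)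
  -- main chain in ℝ≥0∞
  have hTle : T ≤ ENNReal.ofReal (β * d) * I1 + (J1 - J2) := by
    rw [hsplit]
    exact add_le_add hT1 hT2
  have hchain : μK {ω | largestVal ω - secondLargestVal ω ≤ d}
      ≤ ((n+2) * (n+1) : ℕ) * (ENNReal.ofReal (β * d) * I1 + (J1 - J2)) :=
    hEvent.trans (mul_le_mul_right hTle _)
  -- to real numbers
  set p := F (1 - d) with hpdef
  have hp0 : 0 ≤ p := hF0 _
  have hp1 : p ≤ 1 := hF1 _
  have hRHSfin : ((n+2) * (n+1) : ℕ) * (ENNReal.ofReal (β * d) * I1 + (J1 - J2)) ≠ ⊤ := by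
    apply ENNReal.mul_ne_top (ENNReal.natCast_ne_top _)
    exact ENNReal.add_ne_top.2 ⟨ENNReal.mul_ne_top ENNReal.ofReal_ne_top hI1fin,
      ne_top_of_le_ne_top hJ1fin tsub_le_self⟩
  have hreal : (μK {ω | largestVal ω - secondLargestVal ω ≤ d}).toReal
      ≤ (((n:ℝ)+2) * ((n:ℝ)+1)) * (β * d * I1.toReal + (J1.toReal - J2.toReal)) := by
    have h := ENNReal.toReal_mono hRHSfin hchain
    rw [ENNReal.toReal_mul, ENNReal.toReal_add (ENNReal.mul_ne_top ENNReal.ofReal_ne_top hI1fin)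
      (ne_top_of_le_ne_top hJ1fin tsub_le_self), ENNReal.toReal_mul,
      ENNReal.toReal_ofReal (by positivity), ENNReal.toReal_sub_of_le hJ2J1 hJ1fin,
      ENNReal.toReal_natCast] at h
    convert h using 2
    push_cast
    ring
  -- real identities
  have r1 : ((n:ℝ)+1) * I1.toReal = p ^ (n+1) := by
    have h := congrArg ENNReal.toReal hiden1
    rw [ENNReal.toReal_mul, ENNReal.toReal_pow, ENNReal.toReal_natCast, ← hF] at h
    rw [← hpdef] at h
    convert h using 2
    push_cast
    ring
  have rA1 : ((n:ℝ)+1) * A1.toReal = 1 := by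
    have h := congrArg ENNReal.toReal hidenA1
    rw [ENNReal.toReal_mul, ENNReal.toReal_natCast, ENNReal.toReal_one] at h
    convert h using 2
    push_cast
    ring
  have r2 : ((n:ℝ)+2) * I2.toReal = p ^ (n+2) := by
    have h := congrArg ENNReal.toReal hiden2
    rw [ENNReal.toReal_mul, ENNReal.toReal_pow, ENNReal.toReal_natCast, ← hF] at h
    rw [← hpdef] at h
    convert h using 2
    push_cast
    ring
  have rA2 : ((n:ℝ)+2) * A2.toReal = 1 := by
    have h := congrArg ENNReal.toReal hidenA2
    rw [ENNReal.toReal_mul, ENNReal.toReal_natCast, ENNReal.toReal_one] at h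
    convert h using 2
    push_cast
    ring
  have rIJ1 : I1.toReal + J1.toReal = A1.toReal := by
    rw [← ENNReal.toReal_add hI1fin hJ1fin, hIJ1]
  have rIJ2 : I2.toReal + J2.toReal = A2.toReal := by
    rw [← ENNReal.toReal_add hI2fin hJ2fin, hIJ2]
  have hj1 : ((n:ℝ)+1) * J1.toReal = 1 - p ^ (n+1) := by
    linear_combination ((n:ℝ)+1) * rIJ1 + rA1 - r1
  have hj2 : ((n:ℝ)+2) * J2.toReal = 1 - p ^ (n+2) := by
    linear_combination ((n:ℝ)+2) * rIJ2 + rA2 - r2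
  have hbound2 : (μK {ω | largestVal ω - secondLargestVal ω ≤ d}).toReal
      ≤ ((n:ℝ)+2) * (β*d*p^(n+1)) + ((n:ℝ)+2) * (1 - p^(n+1)) - ((n:ℝ)+1) * (1 - p^(n+2)) := by
    have E : (((n:ℝ)+2) * ((n:ℝ)+1)) * (β * d * I1.toReal + (J1.toReal - J2.toReal))
        = ((n:ℝ)+2) * (β*d*p^(n+1)) + ((n:ℝ)+2) * (1 - p^(n+1)) - ((n:ℝ)+1) * (1 - p^(n+2)) := by
      linear_combination ((n:ℝ)+2) * β * d * r1 + ((n:ℝ)+2) * hj1 - ((n:ℝ)+1) * hj2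
    linarith [hreal, E.le, E.ge]
  -- final arithmetic
  have hgoalshape : (1 : ℝ) - (1 - β * ((n:ℕ)+2 : ℝ) * d) * p ^ (n+2)
      = 1 - (1 - β * (((n:ℝ))+2) * d) * p ^ (n+2) := by push_cast; ring
  have hpq : p ^ (n+2) = p ^ (n+1) * p := by ring
  show _ ≤ 1 - (1 - β * (↑(n+2)) * d) * p ^ (n+2)
  push_cast
  by_cases hbd : β * d ≤ 1
  · have key : 0 ≤ ((n:ℝ)+2) * p^(n+1) * (1-p) * (1-β*d) := by
      apply mul_nonneg
      apply mul_nonneg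
      apply mul_nonneg
      · positivity
      · positivity
      · linarith
      · linarith
    rw [hpq] at hbound2
    rw [show p ^ (n+2) = p ^ (n+1) * p from hpq]
    nlinarith [hbound2, key]
  · push_neg at hbd
    have hP1 : (μK {ω | largestVal ω - secondLargestVal ω ≤ d}).toReal ≤ 1 := by
      have := ENNReal.toReal_mono ENNReal.one_ne_top (prob_le_one
        (μ := μK) (s := {ω | largestVal ω - secondLargestVal ω ≤ d}))
      simpa using this
    have h1 : 1 - β * ((n:ℝ)+2) * d ≤ 0 := by
      have hn2 : (2:ℝ) ≤ (n:ℝ)+2 := by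
        have : (0:ℝ) ≤ (n:ℝ) := Nat.cast_nonneg n
        linarith
      have hbd0 : (0:ℝ) ≤ β*d := by positivity
      have hm : (1:ℝ)*2 ≤ (β*d)*((n:ℝ)+2) := mul_le_mul hbd.le hn2 (by norm_num) hbd0
      nlinarith [hm]
    have h2 : (0:ℝ) ≤ p ^ (n+2) := pow_nonneg hp0 _
    have h3 : (1 - β * ((n:ℝ)+2) * d) * p ^ (n+2) ≤ 0 := mul_nonpos_of_nonpos_of_nonneg h1 h2
    linarith [hP1, h3]
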